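/- Assume the bipartite Bloch data of the context and that ρ is separable. Then for every positive integer l and all real numbers x, y, the block matrix S = [[x·y·E_{l×l}, x·𝟙_l·(T^{(B)})^T], [y·T^{(A)}·𝟙_l^T, T^{(AB)}]], where E_{l×l} is the l×l all-ones matrix and 𝟙_l ∈ ℝ^l is the all-ones column vector, satisfies ‖S‖_tr ≤ √( (l·x² + (d_A²−d_A)/κ_A)·(l·y² + (d_B²−d_B)/κ_B) ); in particular this recovers Shen–Li–Duan's bound when κ_A = κ_B = 2 and Chang–Cui–Zhang–Fei's bound when κ_A = d_A and κ_B = d_B. -/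

import Mathlib

open Matrix ComplexOrder
open scoped Kronecker

/-- The trace norm `‖A‖_tr = Tr((A†A)^{1/2})` of a complex matrix (the sum of its
singular values). -/
noncomputable def traceNorm {m n : Type*} [Fintype m] [Fintype n] [DecidableEq n]
    (A : Matrix m n ℂ) : ℝ :=
  (((Matrix.posSemidef_conjTranspose_mul_self A).1.eigenvectorUnitary : Matrix n n ℂ) *
    Matrix.diagonal (((↑) : ℝ → ℂ) ∘ Real.sqrt ∘ (Matrix.posSemidef_conjTranspose_mul_self A).1.eigenvalues) *
    (star (Matrix.posSemidef_conjTranspose_mul_self A).1.eigenvectorUnitary : Matrix n n ℂ)).trace.re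


open scoped InnerProductSpace

set_option linter.unusedSectionVars false
set_option linter.unusedVariables false
set_option linter.unusedTactic false

-- Cauchy-Schwarz for complex sums
lemma cs_complex {ι : Type*} [Fintype ι] (f g : ι → ℂ) :
    ‖∑ i, f i * g i‖ ≤ Real.sqrt (∑ i, ‖f i‖^2) * Real.sqrt (∑ i, ‖g i‖^2) := by
  have h := Finset.sum_mul_sq_le_sq_mul_sq Finset.univ (fun i => ‖f i‖) (fun i => ‖g i‖)
  calc ‖∑ i, f i * g i‖ ≤ ∑ i, ‖f i * g i‖ := norm_sum_le _ _
    _ = ∑ i, ‖f i‖ * ‖g i‖ := by simp [norm_mul]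
    _ = Real.sqrt ((∑ i, ‖f i‖ * ‖g i‖)^2) := (Real.sqrt_sq (by positivity)).symm
    _ ≤ Real.sqrt ((∑ i, ‖f i‖^2) * ∑ i, ‖g i‖^2) := Real.sqrt_le_sqrt h
    _ = _ := Real.sqrt_mul (by positivity) _

lemma re_dot_self {n : Type*} [Fintype n] (z : n → ℂ) :
    (star z ⬝ᵥ z).re = ∑ i, Complex.normSq (z i) := by
  rw [dotProduct, Complex.re_sum]
  congr 1; funext i
  simp only [Pi.star_apply, RCLike.star_def]
  rw [← Complex.normSq_eq_conj_mul_self, Complex.ofReal_re]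

section core
variable {m n : Type*} [Fintype m] [Fintype n] [DecidableEq n]

lemma exists_polar (S : Matrix m n ℂ) :
    ∃ W : Matrix m n ℂ,
      (∀ z : n → ℂ, (star (W *ᵥ z) ⬝ᵥ (W *ᵥ z)).re ≤ (star z ⬝ᵥ z).re) ∧
      ((Wᴴ * S).trace).re = traceNorm S := by
  have hB := Matrix.posSemidef_conjTranspose_mul_self S
  set H := hB.1
  set U : Matrix n n ℂ := (H.eigenvectorUnitary : Matrix n n ℂ) with hU
  set lam := H.eigenvalues with hlam
  have hUU : Uᴴ * U = 1 := by
    simpa [Matrix.star_eq_conjTranspose] using (Matrix.mem_unitaryGroup_iff').mp H.eigenvectorUnitary.2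
  have hUU' : U * Uᴴ = 1 := by
    simpa [Matrix.star_eq_conjTranspose] using (Matrix.mem_unitaryGroup_iff).mp H.eigenvectorUnitary.2
  have hspec : Sᴴ * S = U * diagonal (RCLike.ofReal ∘ lam) * Uᴴ := by
    simpa [Matrix.star_eq_conjTranspose] using H.spectral_theorem
  have hnn : ∀ i, 0 ≤ lam i := hB.eigenvalues_nonneg
  have hsandwich : ∀ D1 D2 : Matrix n n ℂ,
      (U * D1 * Uᴴ) * (U * D2 * Uᴴ) = U * (D1 * D2) * Uᴴ := by
    intro D1 D2
    calc (U * D1 * Uᴴ) * (U * D2 * Uᴴ) = U * D1 * (Uᴴ * U) * (D2 * Uᴴ) := by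
          simp only [Matrix.mul_assoc]
      _ = U * (D1 * D2) * Uᴴ := by rw [hUU, Matrix.mul_one]; simp only [Matrix.mul_assoc]
  set g : n → ℂ := fun i => ((Real.sqrt (lam i))⁻¹ : ℝ) with hg
  set K : Matrix n n ℂ := U * diagonal g * Uᴴ with hK
  have hKh : Kᴴ = K := by
    rw [hK]
    simp only [conjTranspose_mul, diagonal_conjTranspose, conjTranspose_conjTranspose]
    have : star g = g := by funext i; simp [hg]
    rw [this, ← Matrix.mul_assoc]
  set sq : Matrix n n ℂ := U * diagonal (RCLike.ofReal ∘ Real.sqrt ∘ lam) * Uᴴ with hsq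
  have hsqrt : sq = U * diagonal (RCLike.ofReal ∘ Real.sqrt ∘ lam) * Uᴴ := rfl
  have hmulfun : ∀ i, g i * (RCLike.ofReal ∘ lam : n → ℂ) i
      = (RCLike.ofReal ∘ Real.sqrt ∘ lam : n → ℂ) i := by
    intro i
    show (((Real.sqrt (lam i))⁻¹ : ℝ) : ℂ) * ((lam i : ℝ) : ℂ) = ((Real.sqrt (lam i) : ℝ) : ℂ)
    rw [← Complex.ofReal_mul]
    norm_cast
    rcases eq_or_lt_of_le (hnn i) with h | h
    · simp [← h]
    · have h0 : 0 < Real.sqrt (lam i) := Real.sqrt_pos.mpr h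
      rw [inv_mul_eq_div, div_eq_iff h0.ne', Real.mul_self_sqrt (hnn i)]
  have hfun : (fun i => g i * (RCLike.ofReal ∘ lam : n → ℂ) i)
      = (RCLike.ofReal ∘ Real.sqrt ∘ lam : n → ℂ) := funext hmulfun
  have key : (S * K)ᴴ * S = sq := by
    rw [conjTranspose_mul, hKh, Matrix.mul_assoc, hsqrt, hspec, hK, hsandwich,
      diagonal_mul_diagonal, hfun]
  refine ⟨S * K, ?_, ?_⟩
  · -- contraction
    intro z
    set q : n → ℝ := fun i => Real.sqrt (lam i) * (Real.sqrt (lam i))⁻¹ with hq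
    have hq01 : ∀ i, 0 ≤ q i ∧ q i ≤ 1 := by
      intro i
      rcases eq_or_ne (Real.sqrt (lam i)) 0 with h | h
      · simp [hq, h]
      · simp [hq, mul_inv_cancel₀ h]
    have hWW : (S * K)ᴴ * (S * K)
        = U * diagonal (fun i => ((q i : ℝ) : ℂ)) * Uᴴ := by
      rw [← Matrix.mul_assoc, key, hsqrt, hK, hsandwich, diagonal_mul_diagonal]
      congr 2
      funext i
      simp [hg, hq, Function.comp]
    have h1 : star ((S * K) *ᵥ z) ⬝ᵥ ((S * K) *ᵥ z)
        = star z ⬝ᵥ (((S * K)ᴴ * (S * K)) *ᵥ z) := by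
      rw [star_mulVec, ← dotProduct_mulVec, mulVec_mulVec]
    set t : n → ℂ := Uᴴ *ᵥ z with ht
    have hst : star z ᵥ* U = star t := by
      rw [ht, star_mulVec, conjTranspose_conjTranspose]
    have h2 : star z ⬝ᵥ ((U * diagonal (fun i => ((q i : ℝ) : ℂ)) * Uᴴ) *ᵥ z)
        = ∑ i, ((q i : ℂ) * (starRingEnd ℂ (t i) * t i)) := by
      rw [← mulVec_mulVec, ← mulVec_mulVec, dotProduct_mulVec, hst, dotProduct, ← ht]
      congr 1; funext i
      rw [mulVec_diagonal]
      simp only [Pi.star_apply, RCLike.star_def]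
      ring
    have h3 : star t ⬝ᵥ t = star z ⬝ᵥ z := by
      rw [ht, star_mulVec, conjTranspose_conjTranspose, ← dotProduct_mulVec, mulVec_mulVec,
        hUU', one_mulVec]
    rw [h1, hWW, h2]
    have : (∑ i, ((q i : ℂ) * (starRingEnd ℂ (t i) * t i))).re
        = ∑ i, q i * Complex.normSq (t i) := by
      rw [Complex.re_sum]
      congr 1; funext i
      rw [← Complex.normSq_eq_conj_mul_self, ← Complex.ofReal_mul, Complex.ofReal_re]
    rw [this, re_dot_self]
    have hts : ∑ i, Complex.normSq (t i) = ∑ i, Complex.normSq (z i) := by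
      have := congrArg Complex.re h3
      rwa [re_dot_self, re_dot_self] at this
    calc ∑ i, q i * Complex.normSq (t i) ≤ ∑ i, Complex.normSq (t i) := by
          apply Finset.sum_le_sum
          intro i _
          have := hq01 i
          nlinarith [Complex.normSq_nonneg (t i)]
      _ = _ := hts
  · rw [key]; rfl
end core

lemma norm_sq_sum_eq {ι : Type*} [Fintype ι] (z : ι → ℂ) :
    ∑ i, ‖z i‖^2 = ∑ i, Complex.normSq (z i) := by
  congr 1; funext i; rw [← Complex.sq_norm]

lemma traceNorm_sum_rankOne_le {m n M : Type*} [Fintype m] [Fintype n] [DecidableEq n] [Fintype M]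
    (w : M → ℝ) (hw : ∀ k, 0 ≤ w k) (u : M → m → ℂ) (v : M → n → ℂ) :
    traceNorm (∑ k, (w k : ℂ) • Matrix.vecMulVec (u k) (v k))
      ≤ ∑ k, w k * (Real.sqrt (∑ p, ‖u k p‖^2) * Real.sqrt (∑ q, ‖v k q‖^2)) := by
  obtain ⟨W, hWc, hWt⟩ := exists_polar (∑ k, (w k : ℂ) • Matrix.vecMulVec (u k) (v k))
  rw [← hWt]
  have hsplit : (Wᴴ * ∑ k, (w k : ℂ) • vecMulVec (u k) (v k)).trace
      = ∑ k, (w k : ℂ) * (Wᴴ * vecMulVec (u k) (v k)).trace := by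
    rw [Matrix.mul_sum, trace_sum]
    congr 1; funext k
    rw [Matrix.mul_smul, trace_smul, smul_eq_mul]
  rw [hsplit, Complex.re_sum]
  apply Finset.sum_le_sum
  intro k _
  have hterm : ((w k : ℂ) * (Wᴴ * vecMulVec (u k) (v k)).trace).re
      = w k * ((Wᴴ * vecMulVec (u k) (v k)).trace).re := by
    simp [Complex.mul_re]
  rw [hterm]
  apply mul_le_mul_of_nonneg_left _ (hw k)
  -- trace identity
  have htr : (Wᴴ * vecMulVec (u k) (v k)).trace
      = starRingEnd ℂ (∑ q, (starRingEnd ℂ (u k q)) * (W *ᵥ star (v k)) q) := by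
    rw [trace]
    simp only [diag_apply, Matrix.mul_apply, conjTranspose_apply, vecMulVec_apply, mulVec,
      dotProduct, Pi.star_apply, RCLike.star_def]
    rw [Finset.sum_comm, map_sum]
    congr 1; funext q
    simp only [_root_.map_mul, Complex.conj_conj, map_sum, Finset.mul_sum]
    congr 1; funext p
    ring
  have hre : ((Wᴴ * vecMulVec (u k) (v k)).trace).re
      ≤ ‖∑ q, (starRingEnd ℂ (u k q)) * (W *ᵥ star (v k)) q‖ := by
    calc ((Wᴴ * vecMulVec (u k) (v k)).trace).re ≤ ‖(Wᴴ * vecMulVec (u k) (v k)).trace‖ :=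
          Complex.re_le_norm _
      _ = _ := by rw [htr, RCLike.norm_conj]
  refine hre.trans ?_
  refine (cs_complex _ _).trans ?_
  have h1 : ∑ q, ‖starRingEnd ℂ (u k q)‖^2 = ∑ p, ‖u k p‖^2 := by
    congr 1; funext q; rw [RCLike.norm_conj]
  have h2 : Real.sqrt (∑ q, ‖(W *ᵥ star (v k)) q‖^2) ≤ Real.sqrt (∑ q, ‖v k q‖^2) := by
    apply Real.sqrt_le_sqrt
    rw [norm_sq_sum_eq, ← re_dot_self]
    refine (hWc (star (v k))).trans ?_
    rw [re_dot_self]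
    apply le_of_eq
    rw [norm_sq_sum_eq]
    congr 1; funext q
    simp [Complex.normSq_conj]
  rw [h1]
  exact mul_le_mul_of_nonneg_left h2 (Real.sqrt_nonneg _)

variable {d : ℕ}

noncomputable def mvec (d : ℕ) (M : Matrix (Fin d) (Fin d) ℂ) :
    EuclideanSpace ℂ (Fin d × Fin d) := WithLp.toLp 2 (fun p : Fin d × Fin d => M p.1 p.2)

lemma inner_mvec (M N : Matrix (Fin d) (Fin d) ℂ) :
    ⟪mvec d M, mvec d N⟫_ℂ = (Mᴴ * N).trace := by
  simp only [PiLp.inner_apply, RCLike.inner_apply, trace, diag_apply, Matrix.mul_apply,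
    conjTranspose_apply, mvec, RCLike.star_def, PiLp.toLp_apply]
  rw [Fintype.sum_prod_type, Finset.sum_comm]
  exact Finset.sum_congr rfl fun _ _ => Finset.sum_congr rfl fun _ _ => mul_comm _ _

lemma bloch_norm_bound (hd : 1 ≤ d) {κ : ℝ} (hκ : 0 < κ)
    {N : Type*} [Fintype N] [DecidableEq N]
    (G : N → Matrix (Fin d) (Fin d) ℂ)
    (htr : ∀ i, (G i).trace = 0)
    (horth : ∀ i j, ((G i)ᴴ * G j).trace = if i = j then (κ : ℂ) else 0)
    (σ : Matrix (Fin d) (Fin d) ℂ) (hσ : σ.PosSemidef) (hσtr : σ.trace = 1)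
    (hσ2 : σ * σ = σ) :
    ∑ i, ‖((G i)ᴴ * σ).trace‖^2 ≤ κ * (1 - 1/d) := by
  rw [one_div]
  have hd0 : (0:ℝ) < d := by exact_mod_cast Nat.lt_of_lt_of_le Nat.zero_lt_one hd
  set F : Option N → EuclideanSpace ℂ (Fin d × Fin d) := fun o =>
    o.elim (mvec d (((((d:ℝ))⁻¹.sqrt : ℝ) : ℂ) • 1))
      (fun i => mvec d (((κ⁻¹.sqrt : ℝ) : ℂ) • G i)) with hF
  have hmvs : ∀ (c : ℂ) (M : Matrix (Fin d) (Fin d) ℂ), mvec d (c • M) = c • mvec d M := by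
    intro c M; rfl
  have hsd : Real.sqrt ((d:ℝ))⁻¹ * Real.sqrt ((d:ℝ))⁻¹ = (d:ℝ)⁻¹ :=
    Real.mul_self_sqrt (by positivity)
  have hsk : Real.sqrt κ⁻¹ * Real.sqrt κ⁻¹ = κ⁻¹ :=
    Real.mul_self_sqrt (by positivity)
  have horthF : Orthonormal ℂ F := by
    rw [orthonormal_iff_ite]
    intro i j
    match i, j with
    | none, none =>
        simp only [hF, Option.elim, hmvs, inner_smul_left, inner_smul_right, inner_mvec,
          Complex.conj_ofReal, if_pos]
        rw [Matrix.conjTranspose_one, Matrix.one_mul, trace_one]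
        push_cast
        rw [← Complex.ofReal_natCast]
        norm_cast
        rw [← mul_assoc, hsd]
        simp only [Fintype.card_fin]
        exact inv_mul_cancel₀ hd0.ne'
    | none, some j =>
        simp only [hF, Option.elim, hmvs, inner_smul_left, inner_smul_right, inner_mvec,
          Complex.conj_ofReal]
        rw [Matrix.conjTranspose_one, Matrix.one_mul, htr j]
        simp
    | some i, none =>
        simp only [hF, Option.elim, hmvs, inner_smul_left, inner_smul_right, inner_mvec,
          Complex.conj_ofReal]
        rw [Matrix.mul_one, trace_conjTranspose, htr i]
        simp
    | some i, some j =>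
        simp only [hF, Option.elim, hmvs, inner_smul_left, inner_smul_right, inner_mvec,
          Complex.conj_ofReal, horth i j, Option.some.injEq]
        rcases eq_or_ne i j with h | h
        · subst h
          simp only [if_pos rfl, if_true]
          rw [← mul_assoc, ← Complex.ofReal_mul, hsk, ← Complex.ofReal_mul,
            inv_mul_cancel₀ hκ.ne', Complex.ofReal_one]
        · simp [h]
  have bessel := horthF.sum_inner_products_le (mvec d σ) (s := Finset.univ)
  have hnorm : ‖mvec d σ‖^2 = 1 := by
    rw [← inner_self_eq_norm_sq (𝕜 := ℂ), inner_mvec, hσ.1, hσ2, hσtr]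
    simp
  rw [hnorm, Fintype.sum_option] at bessel
  have hnone : ‖⟪F none, mvec d σ⟫_ℂ‖^2 = (d:ℝ)⁻¹ := by
    simp only [hF, Option.elim, hmvs, inner_smul_left, inner_mvec, Complex.conj_ofReal]
    rw [Matrix.conjTranspose_one, Matrix.one_mul, hσtr, mul_one]
    rw [Complex.norm_real, Real.norm_eq_abs, sq_abs, sq, hsd]
  have hsome : ∀ i, ‖⟪F (some i), mvec d σ⟫_ℂ‖^2 = κ⁻¹ * ‖((G i)ᴴ * σ).trace‖^2 := by
    intro i
    simp only [hF, Option.elim, hmvs, inner_smul_left, inner_mvec, Complex.conj_ofReal]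
    rw [norm_mul, mul_pow, Complex.norm_real, Real.norm_eq_abs, sq_abs, sq, hsk]
  rw [hnone] at bessel
  simp only [hsome] at bessel
  rw [← Finset.mul_sum] at bessel
  have : κ⁻¹ * ∑ i, ‖((G i)ᴴ * σ).trace‖^2 ≤ 1 - (d:ℝ)⁻¹ := by linarith
  calc ∑ i, ‖((G i)ᴴ * σ).trace‖^2 = κ * (κ⁻¹ * ∑ i, ‖((G i)ᴴ * σ).trace‖^2) := by
        field_simp
    _ ≤ κ * (1 - (d:ℝ)⁻¹) := by
        apply mul_le_mul_of_nonneg_left this hκ.le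

set_option maxHeartbeats 1000000 in
/-- (Unified form of Shen–Li–Duan's and Chang–Cui–Zhang–Fei's criteria.)
If the bipartite state `ρ` is separable, then for every `l ≥ 1` and reals `x, y` the block
matrix `[[xy E_{l×l}, x 𝟙_l (T^{(B)})ᵀ], [y T^{(A)} 𝟙_lᵀ, T^{(AB)}]]` has trace norm at
most `√((l x² + (d_A²−d_A)/κ_A)·(l y² + (d_B²−d_B)/κ_B))`. -/
theorem stmt_5
    (dA dB : ℕ) (hdA : 1 ≤ dA) (hdB : 1 ≤ dB)
    (κA κB : ℝ) (hκA : 0 < κA) (hκB : 0 < κB)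
    (GA : Fin (dA ^ 2 - 1) → Matrix (Fin dA) (Fin dA) ℂ)
    (GB : Fin (dB ^ 2 - 1) → Matrix (Fin dB) (Fin dB) ℂ)
    (hGAtr : ∀ i, (GA i).trace = 0)
    (hGAorth : ∀ i j, ((GA i)ᴴ * GA j).trace = if i = j then (κA : ℂ) else 0)
    (hGBtr : ∀ i, (GB i).trace = 0)
    (hGBorth : ∀ i j, ((GB i)ᴴ * GB j).trace = if i = j then (κB : ℂ) else 0)
    (ρ : Matrix (Fin dA × Fin dB) (Fin dA × Fin dB) ℂ)
    (hρ : ρ.PosSemidef) (hρtr : ρ.trace = 1)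
    (TA : Fin (dA ^ 2 - 1) → ℂ) (TB : Fin (dB ^ 2 - 1) → ℂ)
    (TAB : Matrix (Fin (dA ^ 2 - 1)) (Fin (dB ^ 2 - 1)) ℂ)
    (hrep : ρ = (((dA : ℂ) * dB))⁻¹ •
      ((1 : Matrix (Fin dA) (Fin dA) ℂ) ⊗ₖ (1 : Matrix (Fin dB) (Fin dB) ℂ)
        + ∑ i, TA i • (GA i ⊗ₖ (1 : Matrix (Fin dB) (Fin dB) ℂ))
        + ∑ j, TB j • ((1 : Matrix (Fin dA) (Fin dA) ℂ) ⊗ₖ GB j)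
        + ∑ i, ∑ j, TAB i j • (GA i ⊗ₖ GB j)))
    (hsep : ∃ (M : ℕ) (w : Fin M → ℝ)
        (σ : Fin M → Matrix (Fin dA) (Fin dA) ℂ)
        (τ : Fin M → Matrix (Fin dB) (Fin dB) ℂ),
      (∀ i, 0 ≤ w i) ∧ (∑ i, w i = 1) ∧
      (∀ i, (σ i).PosSemidef ∧ (σ i).trace = 1 ∧ σ i * σ i = σ i) ∧
      (∀ i, (τ i).PosSemidef ∧ (τ i).trace = 1 ∧ τ i * τ i = τ i) ∧
      ρ = ∑ i, (w i : ℂ) • (σ i ⊗ₖ τ i))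
    :
    ∀ (l : ℕ), 1 ≤ l → ∀ (x y : ℝ),
      traceNorm (Matrix.fromBlocks
          (Matrix.of fun (_ : Fin l) (_ : Fin l) => ((x * y : ℝ) : ℂ))
          (Matrix.of fun (_ : Fin l) (j : Fin (dB ^ 2 - 1)) => ((x : ℝ) : ℂ) * TB j)
          (Matrix.of fun (i : Fin (dA ^ 2 - 1)) (_ : Fin l) => ((y : ℝ) : ℂ) * TA i)
          TAB)
        ≤ Real.sqrt ((l * x ^ 2 + ((dA : ℝ) ^ 2 - dA) / κA) *
            (l * y ^ 2 + ((dB : ℝ) ^ 2 - dB) / κB)) := by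
  intro l hl x y
  obtain ⟨M, w, σ, τ, hw, hw1, hσp, hτp, hdecomp⟩ := hsep
  have hdA0 : (dA : ℝ) ≠ 0 := by positivity
  have hdB0 : (dB : ℝ) ≠ 0 := by positivity
  have hdA0' : (dA : ℂ) ≠ 0 := by exact_mod_cast Nat.cast_ne_zero.mpr (by omega)
  have hdB0' : (dB : ℂ) ≠ 0 := by exact_mod_cast Nat.cast_ne_zero.mpr (by omega)
  have hκA0' : (κA : ℂ) ≠ 0 := by exact_mod_cast Complex.ofReal_ne_zero.mpr hκA.ne'
  have hκB0' : (κB : ℂ) ≠ 0 := by exact_mod_cast Complex.ofReal_ne_zero.mpr hκB.ne'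
  -- two ways to compute trace((X ⊗ Y) ρ)
  have hkey : ∀ (X : Matrix (Fin dA) (Fin dA) ℂ) (Y : Matrix (Fin dB) (Fin dB) ℂ),
      ((X ⊗ₖ Y) * ρ).trace
        = (((dA : ℂ) * dB))⁻¹ * ((X.trace * Y.trace)
          + (∑ i, TA i * ((X * GA i).trace * Y.trace))
          + (∑ j, TB j * (X.trace * (Y * GB j).trace))
          + ∑ i, ∑ j, TAB i j * ((X * GA i).trace * (Y * GB j).trace)) := by
    intro X Y
    conv_lhs => rw [hrep]
    rw [Matrix.mul_smul, trace_smul, smul_eq_mul]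
    congr 1
    simp only [Matrix.mul_add, trace_add, Matrix.mul_sum, trace_sum, Matrix.mul_smul,
      trace_smul, smul_eq_mul, ← mul_kronecker_mul, trace_kronecker, Matrix.mul_one]
  have hsep' : ∀ (X : Matrix (Fin dA) (Fin dA) ℂ) (Y : Matrix (Fin dB) (Fin dB) ℂ),
      ((X ⊗ₖ Y) * ρ).trace = ∑ k, (w k : ℂ) * ((X * σ k).trace * (Y * τ k).trace) := by
    intro X Y
    conv_lhs => rw [hdecomp]
    simp only [Matrix.mul_sum, trace_sum, Matrix.mul_smul, trace_smul, smul_eq_mul,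
      ← mul_kronecker_mul, trace_kronecker]
  -- moments
  have hGAconj : ∀ i, ((GA i)ᴴ).trace = 0 := by
    intro i; rw [trace_conjTranspose, hGAtr i, star_zero]
  have hGBconj : ∀ j, ((GB j)ᴴ).trace = 0 := by
    intro j; rw [trace_conjTranspose, hGBtr j, star_zero]
  have htrace1A : (1 : Matrix (Fin dA) (Fin dA) ℂ).trace = (dA : ℂ) := by
    rw [trace_one]; simp
  have htrace1B : (1 : Matrix (Fin dB) (Fin dB) ℂ).trace = (dB : ℂ) := by
    rw [trace_one]; simp
  have hTA : ∀ i, ∑ k, (w k : ℂ) * ((GA i)ᴴ * σ k).trace = (κA : ℂ) * TA i / dA := by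
    intro i
    have h1 := hkey (GA i)ᴴ 1
    have h2 := hsep' (GA i)ᴴ 1
    rw [h1] at h2
    simp only [Matrix.one_mul, Matrix.trace_one, hGAconj, hGAorth, hGBtr, htrace1B,
      zero_mul, mul_zero, Finset.sum_const_zero, add_zero, zero_add, mul_ite, ite_mul,
      Finset.sum_ite_eq, Finset.mem_univ, if_true] at h2
    -- h2 should be: ∑ k, w k * (tA k i * (τ k).trace) = (dA*dB)⁻¹ * (TA i * (κA * dB))
    have hτtr : ∀ k, (τ k).trace = 1 := fun k => (hτp k).2.1
    simp only [hτtr, mul_one] at h2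
    rw [← h2]
    field_simp
  have hTB : ∀ j, ∑ k, (w k : ℂ) * ((GB j)ᴴ * τ k).trace = (κB : ℂ) * TB j / dB := by
    intro j
    have h1 := hkey 1 (GB j)ᴴ
    have h2 := hsep' 1 (GB j)ᴴ
    rw [h1] at h2
    simp only [Matrix.one_mul, Matrix.trace_one, hGBconj, hGBorth, hGAtr, htrace1A,
      zero_mul, mul_zero, Finset.sum_const_zero, add_zero, zero_add, mul_ite, ite_mul,
      Finset.sum_ite_eq, Finset.mem_univ, if_true] at h2
    have hσtr : ∀ k, (σ k).trace = 1 := fun k => (hσp k).2.1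
    simp only [hσtr, one_mul] at h2
    rw [← h2]
    field_simp
  have hTAB : ∀ i j, ∑ k, (w k : ℂ) * (((GA i)ᴴ * σ k).trace * ((GB j)ᴴ * τ k).trace)
      = (κA : ℂ) * κB * TAB i j / ((dA : ℂ) * dB) := by
    intro i j
    have h1 := hkey (GA i)ᴴ (GB j)ᴴ
    have h2 := hsep' (GA i)ᴴ (GB j)ᴴ
    rw [h1] at h2
    simp only [hGAconj, hGBconj, hGAorth, hGBorth, zero_mul, mul_zero,
      Finset.sum_const_zero, add_zero, zero_add, mul_ite, ite_mul,
      Finset.sum_ite_eq, Finset.mem_univ, if_true] at h2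
    rw [← h2]
    field_simp
  -- assembly
  set rA : ℝ := dA / κA with hrA
  set rB : ℝ := dB / κB with hrB
  set uu : Fin M → (Fin l ⊕ Fin (dA ^ 2 - 1)) → ℂ := fun k =>
    Sum.elim (fun _ => (x : ℂ)) (fun i => ((rA : ℝ) : ℂ) * ((GA i)ᴴ * σ k).trace) with huu
  set vv : Fin M → (Fin l ⊕ Fin (dB ^ 2 - 1)) → ℂ := fun k =>
    Sum.elim (fun _ => (y : ℂ)) (fun j => ((rB : ℝ) : ℂ) * ((GB j)ᴴ * τ k).trace) with hvv
  have hw1' : ∑ k, (w k : ℂ) = 1 := by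
    rw [← Complex.ofReal_sum, hw1, Complex.ofReal_one]
  have hSdecomp : (Matrix.fromBlocks
          (Matrix.of fun (_ : Fin l) (_ : Fin l) => ((x * y : ℝ) : ℂ))
          (Matrix.of fun (_ : Fin l) (j : Fin (dB ^ 2 - 1)) => ((x : ℝ) : ℂ) * TB j)
          (Matrix.of fun (i : Fin (dA ^ 2 - 1)) (_ : Fin l) => ((y : ℝ) : ℂ) * TA i)
          TAB)
      = ∑ k, (w k : ℂ) • Matrix.vecMulVec (uu k) (vv k) := by
    ext p q
    rw [Matrix.sum_apply]
    cases p with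
    | inl p =>
      cases q with
      | inl q =>
        simp only [fromBlocks_apply₁₁, of_apply, Matrix.smul_apply, vecMulVec_apply,
          huu, hvv, Sum.elim_inl, smul_eq_mul]
        rw [← Finset.sum_mul, hw1', one_mul, Complex.ofReal_mul]
      | inr j =>
        simp only [fromBlocks_apply₁₂, of_apply, Matrix.smul_apply, vecMulVec_apply,
          huu, hvv, Sum.elim_inl, Sum.elim_inr, smul_eq_mul]
        have : ∑ k, (w k : ℂ) * ((x : ℂ) * (((rB : ℝ) : ℂ) * ((GB j)ᴴ * τ k).trace))
            = (x : ℂ) * ((rB : ℝ) : ℂ) * ∑ k, (w k : ℂ) * ((GB j)ᴴ * τ k).trace := by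
          rw [Finset.mul_sum]; congr 1; funext k; ring
        rw [this, hTB j, hrB]
        push_cast
        field_simp
    | inr i =>
      cases q with
      | inl q =>
        simp only [fromBlocks_apply₂₁, of_apply, Matrix.smul_apply, vecMulVec_apply,
          huu, hvv, Sum.elim_inl, Sum.elim_inr, smul_eq_mul]
        have : ∑ k, (w k : ℂ) * ((((rA : ℝ) : ℂ) * ((GA i)ᴴ * σ k).trace) * (y : ℂ))
            = (y : ℂ) * ((rA : ℝ) : ℂ) * ∑ k, (w k : ℂ) * ((GA i)ᴴ * σ k).trace := by
          rw [Finset.mul_sum]; congr 1; funext k; ring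
        rw [this, hTA i, hrA]
        push_cast
        field_simp
      | inr j =>
        simp only [fromBlocks_apply₂₂, Matrix.smul_apply, vecMulVec_apply,
          huu, hvv, Sum.elim_inr, smul_eq_mul]
        have : ∑ k, (w k : ℂ) * ((((rA : ℝ) : ℂ) * ((GA i)ᴴ * σ k).trace)
              * (((rB : ℝ) : ℂ) * ((GB j)ᴴ * τ k).trace))
            = ((rA : ℝ) : ℂ) * ((rB : ℝ) : ℂ)
              * ∑ k, (w k : ℂ) * (((GA i)ᴴ * σ k).trace * ((GB j)ᴴ * τ k).trace) := by
          rw [Finset.mul_sum]; congr 1; funext k; ring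
        rw [this, hTAB i j, hrA, hrB]
        push_cast
        field_simp
  rw [hSdecomp]
  refine (traceNorm_sum_rankOne_le w hw uu vv).trans ?_
  set cA : ℝ := l * x ^ 2 + ((dA : ℝ) ^ 2 - dA) / κA with hcA
  set cB : ℝ := l * y ^ 2 + ((dB : ℝ) ^ 2 - dB) / κB with hcB
  have hdA1 : (1 : ℝ) ≤ dA := by exact_mod_cast hdA
  have hdB1 : (1 : ℝ) ≤ dB := by exact_mod_cast hdB
  have hcA0 : 0 ≤ cA := by
    rw [hcA]
    have : 0 ≤ ((dA : ℝ) ^ 2 - dA) / κA := by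
      apply div_nonneg _ hκA.le
      nlinarith
    positivity
  have hcB0 : 0 ≤ cB := by
    rw [hcB]
    have : 0 ≤ ((dB : ℝ) ^ 2 - dB) / κB := by
      apply div_nonneg _ hκB.le
      nlinarith
    positivity
  have hu : ∀ k, Real.sqrt (∑ p, ‖uu k p‖ ^ 2) ≤ Real.sqrt cA := by
    intro k
    apply Real.sqrt_le_sqrt
    have hbloch := bloch_norm_bound hdA hκA GA hGAtr hGAorth (σ k) (hσp k).1 (hσp k).2.1
      (hσp k).2.2
    have hsum : ∑ p, ‖uu k p‖ ^ 2
        = l * x ^ 2 + rA ^ 2 * ∑ i, ‖((GA i)ᴴ * σ k).trace‖ ^ 2 := by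
      rw [Fintype.sum_sum_type]
      congr 1
      · have h1 : ∀ a : Fin l, ‖uu k (Sum.inl a)‖ ^ 2 = x ^ 2 := fun a => by
          simp only [huu, Sum.elim_inl]
          rw [Complex.norm_real, Real.norm_eq_abs, sq_abs]
        rw [Finset.sum_congr rfl (fun a _ => h1 a), Finset.sum_const, Finset.card_univ,
          Fintype.card_fin, nsmul_eq_mul]
      · rw [Finset.mul_sum]
        congr 1; funext i
        simp only [huu, Sum.elim_inr]
        rw [norm_mul, mul_pow, Complex.norm_real, Real.norm_eq_abs, sq_abs]
    rw [hsum, hcA]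
    have hrA0 : 0 ≤ rA := by rw [hrA]; positivity
    have : rA ^ 2 * ∑ i, ‖((GA i)ᴴ * σ k).trace‖ ^ 2 ≤ rA ^ 2 * (κA * (1 - 1 / dA)) := by
      apply mul_le_mul_of_nonneg_left hbloch (by positivity)
    refine add_le_add_right (this.trans (le_of_eq ?_)) _
    rw [hrA]
    field_simp
  have hv : ∀ k, Real.sqrt (∑ q, ‖vv k q‖ ^ 2) ≤ Real.sqrt cB := by
    intro k
    apply Real.sqrt_le_sqrt
    have hbloch := bloch_norm_bound hdB hκB GB hGBtr hGBorth (τ k) (hτp k).1 (hτp k).2.1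
      (hτp k).2.2
    have hsum : ∑ q, ‖vv k q‖ ^ 2
        = l * y ^ 2 + rB ^ 2 * ∑ j, ‖((GB j)ᴴ * τ k).trace‖ ^ 2 := by
      rw [Fintype.sum_sum_type]
      congr 1
      · have h1 : ∀ a : Fin l, ‖vv k (Sum.inl a)‖ ^ 2 = y ^ 2 := fun a => by
          simp only [hvv, Sum.elim_inl]
          rw [Complex.norm_real, Real.norm_eq_abs, sq_abs]
        rw [Finset.sum_congr rfl (fun a _ => h1 a), Finset.sum_const, Finset.card_univ,
          Fintype.card_fin, nsmul_eq_mul]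
      · rw [Finset.mul_sum]
        congr 1; funext j
        simp only [hvv, Sum.elim_inr]
        rw [norm_mul, mul_pow, Complex.norm_real, Real.norm_eq_abs, sq_abs]
    rw [hsum, hcB]
    have : rB ^ 2 * ∑ j, ‖((GB j)ᴴ * τ k).trace‖ ^ 2 ≤ rB ^ 2 * (κB * (1 - 1 / dB)) := by
      apply mul_le_mul_of_nonneg_left hbloch (by positivity)
    refine add_le_add_right (this.trans (le_of_eq ?_)) _
    rw [hrB]
    field_simp
  calc ∑ k, w k * (Real.sqrt (∑ p, ‖uu k p‖ ^ 2) * Real.sqrt (∑ q, ‖vv k q‖ ^ 2))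
      ≤ ∑ k, w k * (Real.sqrt cA * Real.sqrt cB) := by
        apply Finset.sum_le_sum
        intro k _
        apply mul_le_mul_of_nonneg_left _ (hw k)
        exact mul_le_mul (hu k) (hv k) (Real.sqrt_nonneg _) (Real.sqrt_nonneg _)
    _ = Real.sqrt cA * Real.sqrt cB := by rw [← Finset.sum_mul, hw1, one_mul]
    _ = Real.sqrt (cA * cB) := (Real.sqrt_mul hcA0 _).symm
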